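/- Suppose (λ_m)_{m≥1} and (d_m)_{m≥1} are positive sequences with λ_m q^m → L > 0 and d_m q^{2ℓm} → M > 0 as m → ∞ (0 < q < 1, ℓ ≥ 1). Then the 'zeta function' Z(s) = ∑_{m≥1} d_m (λ_m² + 1)^{-s/2} converges for s > 2ℓ, diverges for 0 < s < 2ℓ, and the one-sided limit lim_{s→(2ℓ)^+} (s - 2ℓ) Z(s) exists and equals M·L^{-2ℓ}/log(q^{-1}). -/

import Mathlib

open Filter

/-- limit of `t/(1-q^t)` as `t → 0⁺`. -/
lemma aux_geom_limit {q : ℝ} (hq0 : 0 < q) (hq1 : q < 1) :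
    Tendsto (fun t : ℝ => t / (1 - q ^ t)) (nhdsWithin 0 (Set.Ioi 0))
      (nhds (1 / Real.log q⁻¹)) := by
  have hlogq : Real.log q < 0 := Real.log_neg hq0 hq1
  have hderiv : HasDerivAt (fun t : ℝ => 1 - Real.exp (t * Real.log q)) (-Real.log q) 0 := by
    have h1 : HasDerivAt (fun t : ℝ => t * Real.log q) (Real.log q) 0 := by
      simpa using (hasDerivAt_id (0:ℝ)).mul_const (Real.log q)
    have h3 := (hasDerivAt_const (0:ℝ) (1:ℝ)).sub h1.exp
    simp at h3; exact h3
  have hslope := hasDerivAt_iff_tendsto_slope.mp hderiv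
  have hmono : nhdsWithin (0:ℝ) (Set.Ioi 0) ≤ nhdsWithin 0 {(0:ℝ)}ᶜ :=
    nhdsWithin_mono _ (fun x hx => ne_of_gt hx)
  have h4 : Tendsto (fun t : ℝ => (slope (fun t : ℝ => 1 - Real.exp (t * Real.log q)) 0 t)⁻¹)
      (nhdsWithin 0 (Set.Ioi 0)) (nhds (-Real.log q)⁻¹) :=
    (hslope.mono_left hmono).inv₀ (by simpa using hlogq.ne)
  have heq : (fun t : ℝ => (slope (fun t : ℝ => 1 - Real.exp (t * Real.log q)) 0 t)⁻¹)
      = fun t : ℝ => t / (1 - q ^ t) := by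
    funext t
    rw [slope_def_field]
    simp [Real.rpow_def_of_pos hq0, div_eq_mul_inv, mul_comm]
  rw [heq] at h4
  have : (-Real.log q)⁻¹ = 1 / Real.log q⁻¹ := by rw [Real.log_inv, one_div]
  rwa [this] at h4

/-- factorization of the general term. -/
lemma aux_term_eq {q : ℝ} (hq0 : 0 < q) (ℓ : ℕ) (lam d : ℕ → ℝ) (s : ℝ) (m : ℕ) :
    d m * (lam m ^ 2 + 1) ^ (-s / 2) =
      (d m * q ^ (2 * ℓ * m)) * (((lam m ^ 2 + 1) * q ^ (2 * m)) ^ (-s / 2))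
        * (q ^ (s - 2 * (ℓ:ℝ))) ^ m := by
  have hbase : (0:ℝ) < lam m ^ 2 + 1 := by positivity
  have h1 : ((lam m ^ 2 + 1) * q ^ (2 * m)) ^ (-s / 2)
      = (lam m ^ 2 + 1) ^ (-s / 2) * (q ^ (2*m) : ℝ) ^ (-s / 2) :=
    Real.mul_rpow hbase.le (by positivity)
  have h2 : (q ^ (2*m) : ℝ) ^ (-s/2) = q ^ (((2*m : ℕ) : ℝ) * (-s/2)) := by
    rw [← Real.rpow_natCast q (2*m), ← Real.rpow_mul hq0.le]
  have h3 : ((q ^ (s - 2 * (ℓ:ℝ))) : ℝ) ^ m = q ^ ((s - 2*(ℓ:ℝ)) * m) := by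
    rw [← Real.rpow_natCast (q ^ (s - 2 * (ℓ:ℝ))) m, ← Real.rpow_mul hq0.le]
  have h4 : q ^ (2*ℓ*m) = q ^ (((2*ℓ*m : ℕ) : ℝ)) := (Real.rpow_natCast q _).symm
  rw [h1, h2, h3, h4]
  have h5 : q ^ (((2*ℓ*m : ℕ) : ℝ)) * q ^ (((2*m : ℕ) : ℝ) * (-s/2)) * q ^ ((s - 2*(ℓ:ℝ)) * m) = 1 := by
    rw [← Real.rpow_add hq0, ← Real.rpow_add hq0, ← Real.rpow_zero q]
    congr 1
    push_cast
    ring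
  calc d m * (lam m ^ 2 + 1) ^ (-s / 2)
      = d m * (lam m ^ 2 + 1) ^ (-s / 2) *
        (q ^ (((2*ℓ*m : ℕ) : ℝ)) * q ^ (((2*m : ℕ) : ℝ) * (-s/2)) * q ^ ((s - 2*(ℓ:ℝ)) * m)) := by
        rw [h5, mul_one]
    _ = d m * q ^ (((2*ℓ*m : ℕ) : ℝ)) *
        ((lam m ^ 2 + 1) ^ (-s / 2) * q ^ (((2*m : ℕ) : ℝ) * (-s/2))) * q ^ ((s - 2*(ℓ:ℝ)) * m) := by
        ring

/-- limit of `E m = (lam m ^ 2 + 1) * q ^ (2m)`. -/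
lemma aux_E_lim {q : ℝ} (hq0 : 0 < q) (hq1 : q < 1) (lam : ℕ → ℝ) {L : ℝ}
    (hlam : Tendsto (fun m : ℕ => lam m * q ^ m) atTop (nhds L)) :
    Tendsto (fun m : ℕ => (lam m ^ 2 + 1) * q ^ (2 * m)) atTop (nhds (L ^ 2)) := by
  have hqm : Tendsto (fun m : ℕ => q ^ m) atTop (nhds 0) :=
    tendsto_pow_atTop_nhds_zero_of_lt_one hq0.le hq1
  have h := (hlam.mul hlam).add (hqm.mul hqm)
  have heq : (fun m : ℕ => (lam m * q ^ m) * (lam m * q ^ m) + q ^ m * q ^ m)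
      = fun m : ℕ => (lam m ^ 2 + 1) * q ^ (2 * m) := by
    funext m
    ring
  rw [heq] at h
  have : L * L + 0 * 0 = L ^ 2 := by ring
  rwa [this] at h

/-- summability for `s > 2ℓ`. -/
lemma aux_summable {q : ℝ} (hq0 : 0 < q) (hq1 : q < 1)
    (ℓ : ℕ) (lam d : ℕ → ℝ)
    (hlam_pos : ∀ m, 0 < lam m) (hd_pos : ∀ m, 0 < d m)
    {L M : ℝ} (hL : 0 < L) (hM : 0 < M)
    (hlam : Tendsto (fun m : ℕ => lam m * q ^ m) atTop (nhds L))
    (hd : Tendsto (fun m : ℕ => d m * q ^ (2 * ℓ * m)) atTop (nhds M))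
    (s : ℝ) (hs : 2 * (ℓ:ℝ) < s) :
    Summable fun m : ℕ => d m * (lam m ^ 2 + 1) ^ (-s / 2) := by
  set r : ℝ := q ^ (s - 2 * (ℓ:ℝ)) with hr
  have hr0 : 0 < r := Real.rpow_pos_of_pos hq0 _
  have hr1 : r < 1 := Real.rpow_lt_one hq0.le hq1 (by linarith)
  have hE := aux_E_lim hq0 hq1 lam hlam
  have hL2 : (0:ℝ) < L ^ 2 := by positivity
  have hcE : Tendsto (fun m : ℕ => (d m * q ^ (2*ℓ*m)) * ((lam m ^ 2 + 1) * q ^ (2*m)) ^ (-s/2))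
      atTop (nhds (M * (L ^ 2) ^ (-s/2))) :=
    hd.mul (hE.rpow_const (Or.inl hL2.ne'))
  have hKev : ∀ᶠ m in atTop,
      (d m * q ^ (2*ℓ*m)) * ((lam m ^ 2 + 1) * q ^ (2*m)) ^ (-s/2) ≤ M * (L ^ 2) ^ (-s/2) + 1 :=
    hcE.eventually_le_const (by linarith)
  have hbig : (fun m : ℕ => d m * (lam m ^ 2 + 1) ^ (-s / 2)) =O[atTop]
      (fun m : ℕ => r ^ m) := by
    apply Asymptotics.IsBigO.of_bound (M * (L ^ 2) ^ (-s/2) + 1)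
    filter_upwards [hKev] with m hm
    have hEm : (0:ℝ) < (lam m ^ 2 + 1) * q ^ (2*m) := by positivity
    have hterm : d m * (lam m ^ 2 + 1) ^ (-s / 2)
      = (d m * q ^ (2*ℓ*m)) * ((lam m ^ 2 + 1) * q ^ (2*m)) ^ (-s/2) * r ^ m :=
      aux_term_eq hq0 ℓ lam d s m
    have hpos : (0:ℝ) < d m * (lam m ^ 2 + 1) ^ (-s / 2) := by
      have := hd_pos m
      positivity
    rw [Real.norm_eq_abs, Real.norm_eq_abs, abs_of_pos hpos, abs_of_pos (pow_pos hr0 m), hterm]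
    have hrm : (0:ℝ) ≤ r ^ m := (pow_pos hr0 m).le
    exact mul_le_mul_of_nonneg_right hm hrm
  exact summable_of_isBigO_nat (summable_geometric_of_lt_one hr0.le hr1) hbig

/-- divergence for `0 < s < 2ℓ`. -/
lemma aux_not_summable {q : ℝ} (hq0 : 0 < q) (hq1 : q < 1)
    (ℓ : ℕ) (lam d : ℕ → ℝ)
    (hd_pos : ∀ m, 0 < d m)
    {L M : ℝ} (hL : 0 < L) (hM : 0 < M)
    (hlam : Tendsto (fun m : ℕ => lam m * q ^ m) atTop (nhds L))
    (hd : Tendsto (fun m : ℕ => d m * q ^ (2 * ℓ * m)) atTop (nhds M))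
    (s : ℝ) (hs0 : 0 < s) (hs : s < 2 * (ℓ:ℝ)) :
    ¬ Summable fun m : ℕ => d m * (lam m ^ 2 + 1) ^ (-s / 2) := by
  intro hsum
  set r : ℝ := q ^ (s - 2 * (ℓ:ℝ)) with hr
  have hr1 : 1 < r := by
    rw [hr]
    rw [Real.one_lt_rpow_iff_of_pos hq0]
    exact Or.inr ⟨hq1, by linarith⟩
  have hE := aux_E_lim hq0 hq1 lam hlam
  have hL2 : (0:ℝ) < L ^ 2 := by positivity
  have hcE : Tendsto (fun m : ℕ => (d m * q ^ (2*ℓ*m)) * ((lam m ^ 2 + 1) * q ^ (2*m)) ^ (-s/2))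
      atTop (nhds (M * (L ^ 2) ^ (-s/2))) :=
    hd.mul (hE.rpow_const (Or.inl hL2.ne'))
  set δ : ℝ := M * (L ^ 2) ^ (-s/2) with hδdef
  have hδ : 0 < δ := by
    have : (0:ℝ) < (L ^ 2) ^ (-s/2) := Real.rpow_pos_of_pos hL2 _
    positivity
  have h1 : ∀ᶠ m in atTop,
      δ/2 ≤ (d m * q ^ (2*ℓ*m)) * ((lam m ^ 2 + 1) * q ^ (2*m)) ^ (-s/2) :=
    hcE.eventually_const_le (by linarith)
  have h2 : ∀ᶠ m in atTop, d m * (lam m ^ 2 + 1) ^ (-s / 2) < δ/2 :=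
    by have := Summable.tendsto_atTop_zero hsum; exact this.eventually_lt_const (by linarith)
  obtain ⟨m, hm1, hm2⟩ := (h1.and h2).exists
  have hterm : d m * (lam m ^ 2 + 1) ^ (-s / 2)
      = (d m * q ^ (2*ℓ*m)) * ((lam m ^ 2 + 1) * q ^ (2*m)) ^ (-s/2) * r ^ m :=
      aux_term_eq hq0 ℓ lam d s m
  have hrm : (1:ℝ) ≤ r ^ m := one_le_pow₀ hr1.le
  have : δ/2 ≤ d m * (lam m ^ 2 + 1) ^ (-s / 2) := by
    rw [hterm]
    calc δ/2 = δ/2 * 1 := by ring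
      _ ≤ (d m * q ^ (2*ℓ*m)) * ((lam m ^ 2 + 1) * q ^ (2*m)) ^ (-s/2) * r ^ m :=
        mul_le_mul hm1 hrm zero_le_one (le_trans (by linarith) hm1)
  linarith

/-- the residue limit. -/
lemma aux_limit {q : ℝ} (hq0 : 0 < q) (hq1 : q < 1)
    (ℓ : ℕ) (hℓ : 0 < ℓ) (lam d : ℕ → ℝ)
    (hlam_pos : ∀ m, 0 < lam m) (hd_pos : ∀ m, 0 < d m)
    {L M : ℝ} (hL : 0 < L) (hM : 0 < M)
    (hlam : Tendsto (fun m : ℕ => lam m * q ^ m) atTop (nhds L))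
    (hd : Tendsto (fun m : ℕ => d m * q ^ (2 * ℓ * m)) atTop (nhds M)) :
    Tendsto
      (fun s : ℝ => (s - 2 * (ℓ:ℝ)) * ∑' m : ℕ, d m * (lam m ^ 2 + 1) ^ (-s / 2))
      (nhdsWithin (2 * (ℓ:ℝ)) (Set.Ioi (2 * (ℓ:ℝ))))
      (nhds (M / L ^ (2 * ℓ) / Real.log q⁻¹)) := by
  have hL2 : (0:ℝ) < L ^ 2 := by positivity
  have hlog : 0 < Real.log q⁻¹ := by
    rw [Real.log_inv]
    have := Real.log_neg hq0 hq1
    linarith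
  have hE := aux_E_lim hq0 hq1 lam hlam
  have hℓR : (0:ℝ) < 2 * (ℓ:ℝ) := by
    have : (1:ℝ) ≤ (ℓ:ℝ) := by exact_mod_cast hℓ
    linarith
  have hc₀ : M * (L ^ 2 : ℝ) ^ (-(ℓ:ℝ)) / Real.log q⁻¹ = M / L ^ (2*ℓ) / Real.log q⁻¹ := by
    rw [Real.rpow_neg hL2.le, Real.rpow_natCast, ← pow_mul, div_eq_mul_inv M]
  -- the sub map to 𝓝[>] 0
  have hsub0 : Tendsto (fun s : ℝ => s - 2 * (ℓ:ℝ)) (nhdsWithin (2*(ℓ:ℝ)) (Set.Ioi (2*(ℓ:ℝ)))) (nhds 0) := by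
    have h : Tendsto (fun s : ℝ => s - 2*(ℓ:ℝ)) (nhds (2*(ℓ:ℝ))) (nhds (2*(ℓ:ℝ) - 2*(ℓ:ℝ))) :=
      (continuous_id.sub continuous_const).tendsto _
    rw [sub_self] at h
    exact h.mono_left nhdsWithin_le_nhds
  have hmap : Tendsto (fun s : ℝ => s - 2 * (ℓ:ℝ)) (nhdsWithin (2*(ℓ:ℝ)) (Set.Ioi (2*(ℓ:ℝ))))
      (nhdsWithin 0 (Set.Ioi 0)) := by
    apply tendsto_nhdsWithin_of_tendsto_nhds_of_eventually_within _ hsub0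
    filter_upwards [self_mem_nhdsWithin] with s hs
    exact sub_pos.mpr (Set.mem_Ioi.mp hs)
  have hr_to_one : Tendsto (fun s : ℝ => q ^ (s - 2*(ℓ:ℝ))) (nhdsWithin (2*(ℓ:ℝ)) (Set.Ioi (2*(ℓ:ℝ)))) (nhds 1) := by
    have h1 : Tendsto (fun t : ℝ => q ^ t) (nhds 0) (nhds 1) := by
      have h := (Real.continuousAt_const_rpow (a := q) (b := 0) hq0.ne').tendsto
      simpa using h
    exact h1.comp (hmap.mono_right nhdsWithin_le_nhds)
  have hratio : Tendsto (fun s : ℝ => (s - 2*(ℓ:ℝ)) / (1 - q ^ (s - 2*(ℓ:ℝ))))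
      (nhdsWithin (2*(ℓ:ℝ)) (Set.Ioi (2*(ℓ:ℝ)))) (nhds (1 / Real.log q⁻¹)) :=
    (aux_geom_limit hq0 hq1).comp hmap
  rw [Metric.tendsto_nhds]
  intro εt hεt
  -- choose ε
  have hup : Tendsto (fun ε : ℝ => (M+ε) * (L^2-ε) ^ (-(ℓ:ℝ)) / Real.log q⁻¹) (nhds 0)
      (nhds (M / L ^ (2*ℓ) / Real.log q⁻¹)) := by
    have hcont : ContinuousAt (fun ε : ℝ => (M+ε) * (L^2-ε) ^ (-(ℓ:ℝ)) / Real.log q⁻¹) 0 := by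
      apply ContinuousAt.div_const
      exact (continuousAt_const.add continuousAt_id).mul
        (ContinuousAt.rpow_const (continuousAt_const.sub continuousAt_id)
          (Or.inl (by simpa using hL2.ne')))
    have h := hcont.tendsto
    simp only [add_zero, sub_zero] at h
    rwa [hc₀] at h
  have hlo : Tendsto (fun ε : ℝ => (M-ε) * (L^2+ε) ^ (-(ℓ:ℝ)) / Real.log q⁻¹) (nhds 0)
      (nhds (M / L ^ (2*ℓ) / Real.log q⁻¹)) := by
    have hcont : ContinuousAt (fun ε : ℝ => (M-ε) * (L^2+ε) ^ (-(ℓ:ℝ)) / Real.log q⁻¹) 0 := by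
      apply ContinuousAt.div_const
      exact (continuousAt_const.sub continuousAt_id).mul
        (ContinuousAt.rpow_const (continuousAt_const.add continuousAt_id)
          (Or.inl (by simpa using hL2.ne')))
    have h := hcont.tendsto
    simp only [sub_zero, add_zero] at h
    rwa [hc₀] at h
  have hev : ∀ᶠ ε in nhds (0:ℝ),
      (ε < M ∧ ε < L^2) ∧
      (M+ε) * (L^2-ε) ^ (-(ℓ:ℝ)) / Real.log q⁻¹ < M / L ^ (2*ℓ) / Real.log q⁻¹ + εt/2 ∧
      M / L ^ (2*ℓ) / Real.log q⁻¹ - εt/2 < (M-ε) * (L^2+ε) ^ (-(ℓ:ℝ)) / Real.log q⁻¹ := by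
    have e1 : ∀ᶠ ε in nhds (0:ℝ), ε < M := eventually_lt_nhds hM
    have e2 : ∀ᶠ ε in nhds (0:ℝ), ε < L^2 := eventually_lt_nhds hL2
    have e3 := hup.eventually_lt_const (show M / L ^ (2*ℓ) / Real.log q⁻¹ < M / L ^ (2*ℓ) / Real.log q⁻¹ + εt/2 by linarith)
    have e4 := hlo.eventually_const_lt (show M / L ^ (2*ℓ) / Real.log q⁻¹ - εt/2 < M / L ^ (2*ℓ) / Real.log q⁻¹ by linarith)
    filter_upwards [e1, e2, e3, e4] with ε h1 h2 h3 h4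
    exact ⟨⟨h1, h2⟩, h3, h4⟩
  obtain ⟨ε, hε0, ⟨hεM, hεL⟩, hupε, hloε⟩ :
      ∃ ε : ℝ, 0 < ε ∧ (ε < M ∧ ε < L^2) ∧
      (M+ε) * (L^2-ε) ^ (-(ℓ:ℝ)) / Real.log q⁻¹ < M / L ^ (2*ℓ) / Real.log q⁻¹ + εt/2 ∧
      M / L ^ (2*ℓ) / Real.log q⁻¹ - εt/2 < (M-ε) * (L^2+ε) ^ (-(ℓ:ℝ)) / Real.log q⁻¹ := by
    obtain ⟨ε, hmem, hεpos⟩ := ((hev.filter_mono (nhdsWithin_le_nhds (s := Set.Ioi (0:ℝ)))).and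
      eventually_mem_nhdsWithin).exists
    exact ⟨ε, hεpos, hmem.1, hmem.2.1, hmem.2.2⟩
  -- choose N
  obtain ⟨N₁, hN₁⟩ := Metric.tendsto_atTop.mp hd ε hε0
  obtain ⟨N₂, hN₂⟩ := Metric.tendsto_atTop.mp hE ε hε0
  set N := max N₁ N₂ with hNdef
  have hNbound : ∀ m, N ≤ m →
      (M - ε ≤ d m * q ^ (2*ℓ*m) ∧ d m * q ^ (2*ℓ*m) ≤ M + ε) ∧
      (L^2 - ε ≤ (lam m ^ 2 + 1) * q ^ (2*m) ∧ (lam m ^ 2 + 1) * q ^ (2*m) ≤ L^2 + ε) := by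
    intro m hm
    have h1 := hN₁ m (le_trans (le_max_left _ _) hm)
    have h2 := hN₂ m (le_trans (le_max_right _ _) hm)
    rw [Real.dist_eq, abs_lt] at h1 h2
    exact ⟨⟨by linarith [h1.1], by linarith [h1.2]⟩, ⟨by linarith [h2.1], by linarith [h2.2]⟩⟩
  -- limits of the sandwich functions
  have hSN_lim : Tendsto (fun s : ℝ => ∑ i ∈ Finset.range N, d i * (lam i ^ 2 + 1) ^ (-s/2))
      (nhdsWithin (2*(ℓ:ℝ)) (Set.Ioi (2*(ℓ:ℝ))))
      (nhds (∑ i ∈ Finset.range N, d i * (lam i ^ 2 + 1) ^ (-(2*(ℓ:ℝ))/2))) := by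
    apply Tendsto.mono_left _ nhdsWithin_le_nhds
    apply tendsto_finset_sum
    intro i _
    have hbase : (0:ℝ) < lam i ^ 2 + 1 := by positivity
    have hc : ContinuousAt (fun s : ℝ => d i * (lam i ^ 2 + 1) ^ (-s/2)) (2*(ℓ:ℝ)) :=
      continuousAt_const.mul ((Real.continuousAt_const_rpow hbase.ne').comp (by fun_prop))
    exact hc.tendsto
  have hUlim : ∀ (A B : ℝ), 0 < B →
      Tendsto (fun s : ℝ => (s - 2*(ℓ:ℝ)) *
          ((∑ i ∈ Finset.range N, d i * (lam i ^ 2 + 1) ^ (-s/2)) +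
            A * B ^ (-s/2) * (q ^ (s - 2*(ℓ:ℝ)))^N / (1 - q ^ (s - 2*(ℓ:ℝ)))))
        (nhdsWithin (2*(ℓ:ℝ)) (Set.Ioi (2*(ℓ:ℝ))))
        (nhds (A * B ^ (-(ℓ:ℝ)) / Real.log q⁻¹)) := by
    intro A B hB
    have h1 : Tendsto (fun s : ℝ => A * B ^ (-s/2)) (nhdsWithin (2*(ℓ:ℝ)) (Set.Ioi (2*(ℓ:ℝ))))
        (nhds (A * B ^ (-(ℓ:ℝ)))) := by
      have hc : ContinuousAt (fun s : ℝ => A * B ^ (-s/2)) (2*(ℓ:ℝ)) :=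
        continuousAt_const.mul ((Real.continuousAt_const_rpow hB.ne').comp (by fun_prop))
      have h := hc.tendsto.mono_left (nhdsWithin_le_nhds (s := Set.Ioi (2*(ℓ:ℝ))))
      have hTv : -(2*(ℓ:ℝ))/2 = -(ℓ:ℝ) := by ring
      simpa [Function.comp, hTv] using h
    have h2 : Tendsto (fun s : ℝ => (q ^ (s - 2*(ℓ:ℝ)))^N)
        (nhdsWithin (2*(ℓ:ℝ)) (Set.Ioi (2*(ℓ:ℝ)))) (nhds 1) := by
      have := hr_to_one.pow N
      simpa using this
    have h3 := (h1.mul h2).mul hratio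
    have h4 : Tendsto (fun s : ℝ => (s - 2*(ℓ:ℝ)) *
        ∑ i ∈ Finset.range N, d i * (lam i ^ 2 + 1) ^ (-s/2))
        (nhdsWithin (2*(ℓ:ℝ)) (Set.Ioi (2*(ℓ:ℝ)))) (nhds 0) := by
      have := hsub0.mul hSN_lim
      simpa using this
    have h5 := h4.add h3
    have hfun : (fun s : ℝ => (s - 2*(ℓ:ℝ)) *
          ((∑ i ∈ Finset.range N, d i * (lam i ^ 2 + 1) ^ (-s/2)) +
            A * B ^ (-s/2) * (q ^ (s - 2*(ℓ:ℝ)))^N / (1 - q ^ (s - 2*(ℓ:ℝ)))))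
        = fun s : ℝ => (s - 2*(ℓ:ℝ)) * ∑ i ∈ Finset.range N, d i * (lam i ^ 2 + 1) ^ (-s/2)
          + (A * B ^ (-s/2) * (q ^ (s - 2*(ℓ:ℝ)))^N) *
            ((s - 2*(ℓ:ℝ)) / (1 - q ^ (s - 2*(ℓ:ℝ)))) := by
      funext s
      ring
    rw [hfun]
    have hval : (0:ℝ) + (A * B ^ (-(ℓ:ℝ)) * 1) * (1 / Real.log q⁻¹)
        = A * B ^ (-(ℓ:ℝ)) / Real.log q⁻¹ := by
      ring
    rwa [hval] at h5
  -- the sandwich bound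
  have hbound : ∀ s : ℝ, 2*(ℓ:ℝ) < s →
      ((s - 2*(ℓ:ℝ)) * ((∑ i ∈ Finset.range N, d i * (lam i ^ 2 + 1) ^ (-s/2)) +
          (M-ε) * (L^2+ε) ^ (-s/2) * (q ^ (s - 2*(ℓ:ℝ)))^N / (1 - q ^ (s - 2*(ℓ:ℝ))))
        ≤ (s - 2*(ℓ:ℝ)) * ∑' m : ℕ, d m * (lam m ^ 2 + 1) ^ (-s / 2)) ∧
      ((s - 2*(ℓ:ℝ)) * ∑' m : ℕ, d m * (lam m ^ 2 + 1) ^ (-s / 2)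
        ≤ (s - 2*(ℓ:ℝ)) * ((∑ i ∈ Finset.range N, d i * (lam i ^ 2 + 1) ^ (-s/2)) +
          (M+ε) * (L^2-ε) ^ (-s/2) * (q ^ (s - 2*(ℓ:ℝ)))^N / (1 - q ^ (s - 2*(ℓ:ℝ))))) := by
    intro s hs
    have hsum := aux_summable hq0 hq1 ℓ lam d hlam_pos hd_pos hL hM hlam hd s hs
    have hr0 : (0:ℝ) < q ^ (s - 2*(ℓ:ℝ)) := Real.rpow_pos_of_pos hq0 _
    have hr1 : q ^ (s - 2*(ℓ:ℝ)) < 1 := Real.rpow_lt_one hq0.le hq1 (by linarith)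
    have hspos : (0:ℝ) < s - 2*(ℓ:ℝ) := sub_pos.mpr hs
    have hs0 : (0:ℝ) < s := by linarith
    have hsN : Summable (fun n : ℕ => d (n+N) * (lam (n+N) ^ 2 + 1) ^ (-s/2)) :=
      (summable_nat_add_iff (f := fun m : ℕ => d m * (lam m ^ 2 + 1) ^ (-s/2)) N).mpr hsum
    have hgeo : Summable (fun n : ℕ => (q ^ (s - 2*(ℓ:ℝ)))^n) :=
      summable_geometric_of_lt_one hr0.le hr1
    -- termwise bounds
    have hterm_le : ∀ n : ℕ, d (n+N) * (lam (n+N) ^ 2 + 1) ^ (-s/2)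
        ≤ ((M+ε) * (L^2-ε) ^ (-s/2) * (q ^ (s - 2*(ℓ:ℝ)))^N) * (q ^ (s - 2*(ℓ:ℝ)))^n := by
      intro n
      obtain ⟨⟨_, hc2⟩, ⟨hE1, _⟩⟩ := hNbound (n+N) (by omega)
      have hEpos : (0:ℝ) < (lam (n+N) ^ 2 + 1) * q ^ (2*(n+N)) := by positivity
      have h1 : ((lam (n+N) ^ 2 + 1) * q ^ (2*(n+N))) ^ (-s/2) ≤ (L^2-ε) ^ (-s/2) :=
        Real.rpow_le_rpow_of_nonpos (by linarith) hE1 (by linarith)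
      have hcE : (d (n+N) * q ^ (2*ℓ*(n+N))) * ((lam (n+N) ^ 2 + 1) * q ^ (2*(n+N))) ^ (-s/2)
          ≤ (M+ε) * (L^2-ε) ^ (-s/2) :=
        mul_le_mul hc2 h1 (Real.rpow_nonneg hEpos.le _) (by linarith)
      rw [aux_term_eq hq0 ℓ lam d s (n+N)]
      calc (d (n+N) * q ^ (2*ℓ*(n+N))) * ((lam (n+N) ^ 2 + 1) * q ^ (2*(n+N))) ^ (-s/2)
            * (q ^ (s - 2*(ℓ:ℝ)))^(n+N)
          ≤ ((M+ε) * (L^2-ε) ^ (-s/2)) * (q ^ (s - 2*(ℓ:ℝ)))^(n+N) :=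
            mul_le_mul_of_nonneg_right hcE (pow_nonneg hr0.le _)
        _ = ((M+ε) * (L^2-ε) ^ (-s/2) * (q ^ (s - 2*(ℓ:ℝ)))^N) * (q ^ (s - 2*(ℓ:ℝ)))^n := by
            rw [pow_add]; ring
    have hterm_ge : ∀ n : ℕ, ((M-ε) * (L^2+ε) ^ (-s/2) * (q ^ (s - 2*(ℓ:ℝ)))^N) * (q ^ (s - 2*(ℓ:ℝ)))^n
        ≤ d (n+N) * (lam (n+N) ^ 2 + 1) ^ (-s/2) := by
      intro n
      obtain ⟨⟨hc1, _⟩, ⟨_, hE2⟩⟩ := hNbound (n+N) (by omega)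
      have hEpos : (0:ℝ) < (lam (n+N) ^ 2 + 1) * q ^ (2*(n+N)) := by positivity
      have h1 : (L^2+ε) ^ (-s/2) ≤ ((lam (n+N) ^ 2 + 1) * q ^ (2*(n+N))) ^ (-s/2) :=
        Real.rpow_le_rpow_of_nonpos hEpos hE2 (by linarith)
      have hcE : (M-ε) * (L^2+ε) ^ (-s/2)
          ≤ (d (n+N) * q ^ (2*ℓ*(n+N))) * ((lam (n+N) ^ 2 + 1) * q ^ (2*(n+N))) ^ (-s/2) :=
        mul_le_mul hc1 h1 (Real.rpow_nonneg (by linarith) _)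
          (by have := hd_pos (n+N); positivity)
      rw [aux_term_eq hq0 ℓ lam d s (n+N)]
      calc ((M-ε) * (L^2+ε) ^ (-s/2) * (q ^ (s - 2*(ℓ:ℝ)))^N) * (q ^ (s - 2*(ℓ:ℝ)))^n
          = ((M-ε) * (L^2+ε) ^ (-s/2)) * (q ^ (s - 2*(ℓ:ℝ)))^(n+N) := by
            rw [pow_add]; ring
        _ ≤ (d (n+N) * q ^ (2*ℓ*(n+N))) * ((lam (n+N) ^ 2 + 1) * q ^ (2*(n+N))) ^ (-s/2)
            * (q ^ (s - 2*(ℓ:ℝ)))^(n+N) :=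
            mul_le_mul_of_nonneg_right hcE (pow_nonneg hr0.le _)
    have htail_le : ∑' n : ℕ, d (n+N) * (lam (n+N) ^ 2 + 1) ^ (-s/2)
        ≤ (M+ε) * (L^2-ε) ^ (-s/2) * (q ^ (s - 2*(ℓ:ℝ)))^N / (1 - q ^ (s - 2*(ℓ:ℝ))) := by
      calc ∑' n : ℕ, d (n+N) * (lam (n+N) ^ 2 + 1) ^ (-s/2)
          ≤ ∑' n : ℕ, ((M+ε) * (L^2-ε) ^ (-s/2) * (q ^ (s - 2*(ℓ:ℝ)))^N) * (q ^ (s - 2*(ℓ:ℝ)))^n :=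
            Summable.tsum_le_tsum hterm_le hsN
              (hgeo.mul_left ((M+ε) * (L^2-ε) ^ (-s/2) * (q ^ (s - 2*(ℓ:ℝ)))^N))
        _ = ((M+ε) * (L^2-ε) ^ (-s/2) * (q ^ (s - 2*(ℓ:ℝ)))^N) * (1 - q ^ (s - 2*(ℓ:ℝ)))⁻¹ := by
            rw [tsum_mul_left, tsum_geometric_of_lt_one hr0.le hr1]
        _ = (M+ε) * (L^2-ε) ^ (-s/2) * (q ^ (s - 2*(ℓ:ℝ)))^N / (1 - q ^ (s - 2*(ℓ:ℝ))) := by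
            ring
    have htail_ge : (M-ε) * (L^2+ε) ^ (-s/2) * (q ^ (s - 2*(ℓ:ℝ)))^N / (1 - q ^ (s - 2*(ℓ:ℝ)))
        ≤ ∑' n : ℕ, d (n+N) * (lam (n+N) ^ 2 + 1) ^ (-s/2) := by
      calc (M-ε) * (L^2+ε) ^ (-s/2) * (q ^ (s - 2*(ℓ:ℝ)))^N / (1 - q ^ (s - 2*(ℓ:ℝ)))
          = ((M-ε) * (L^2+ε) ^ (-s/2) * (q ^ (s - 2*(ℓ:ℝ)))^N) * (1 - q ^ (s - 2*(ℓ:ℝ)))⁻¹ := by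
            ring
        _ = ∑' n : ℕ, ((M-ε) * (L^2+ε) ^ (-s/2) * (q ^ (s - 2*(ℓ:ℝ)))^N) * (q ^ (s - 2*(ℓ:ℝ)))^n := by
            rw [tsum_mul_left, tsum_geometric_of_lt_one hr0.le hr1]
        _ ≤ ∑' n : ℕ, d (n+N) * (lam (n+N) ^ 2 + 1) ^ (-s/2) :=
            Summable.tsum_le_tsum hterm_ge
              (hgeo.mul_left ((M-ε) * (L^2+ε) ^ (-s/2) * (q ^ (s - 2*(ℓ:ℝ)))^N)) hsN
    have hsplit : (∑ i ∈ Finset.range N, d i * (lam i ^ 2 + 1) ^ (-s/2))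
        + ∑' n : ℕ, d (n+N) * (lam (n+N) ^ 2 + 1) ^ (-s/2)
        = ∑' m : ℕ, d m * (lam m ^ 2 + 1) ^ (-s/2) := Summable.sum_add_tsum_nat_add N hsum
    constructor
    · apply mul_le_mul_of_nonneg_left _ hspos.le
      rw [← hsplit]
      linarith [htail_ge]
    · apply mul_le_mul_of_nonneg_left _ hspos.le
      rw [← hsplit]
      linarith [htail_le]
  -- conclude
  have hUp := hUlim (M+ε) (L^2-ε) (by linarith)
  have hLo := hUlim (M-ε) (L^2+ε) (by linarith)
  have e1 := hUp.eventually_lt_const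
    (show (M+ε) * (L^2-ε) ^ (-(ℓ:ℝ)) / Real.log q⁻¹ < M / L ^ (2*ℓ) / Real.log q⁻¹ + εt by linarith)
  have e2 := hLo.eventually_const_lt
    (show M / L ^ (2*ℓ) / Real.log q⁻¹ - εt < (M-ε) * (L^2+ε) ^ (-(ℓ:ℝ)) / Real.log q⁻¹ by linarith)
  filter_upwards [e1, e2, self_mem_nhdsWithin] with s h1 h2 hsmem
  have hs : 2*(ℓ:ℝ) < s := hsmem
  obtain ⟨hlo', hup'⟩ := hbound s hs
  rw [Real.dist_eq, abs_sub_lt_iff]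
  constructor <;> linarith


/-- Spectral dimension with residue: if `λ_m q^m → L > 0` and `d_m q^{2ℓm} → M > 0`
(`0 < q < 1`, `ℓ ≥ 1`, positive sequences), then `Z(s) = ∑_m d_m (λ_m² + 1)^{-s/2}`
converges for `s > 2ℓ`, diverges for `0 < s < 2ℓ`, and
`lim_{s→(2ℓ)^+} (s - 2ℓ) Z(s) = M·L^{-2ℓ}/log(q⁻¹)`. -/
theorem spectral_dimension_two_ell (q : ℝ) (hq0 : 0 < q) (hq1 : q < 1)
    (ℓ : ℕ) (hℓ : 0 < ℓ) (lam d : ℕ → ℝ)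
    (hlam_pos : ∀ m, 0 < lam m) (hd_pos : ∀ m, 0 < d m)
    (L M : ℝ) (hL : 0 < L) (hM : 0 < M)
    (hlam : Tendsto (fun m : ℕ => lam m * q ^ m) atTop (nhds L))
    (hd : Tendsto (fun m : ℕ => d m * q ^ (2 * ℓ * m)) atTop (nhds M)) :
    (∀ s : ℝ, 2 * ℓ < s → Summable fun m : ℕ => d m * (lam m ^ 2 + 1) ^ (-s / 2)) ∧
    (∀ s : ℝ, 0 < s → s < 2 * ℓ →
      ¬ Summable fun m : ℕ => d m * (lam m ^ 2 + 1) ^ (-s / 2)) ∧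
    Tendsto
      (fun s : ℝ => (s - 2 * ℓ) * ∑' m : ℕ, d m * (lam m ^ 2 + 1) ^ (-s / 2))
      (nhdsWithin (2 * ℓ) (Set.Ioi (2 * ℓ)))
      (nhds (M / L ^ (2 * ℓ) / Real.log q⁻¹)) := by
  exact ⟨fun s hs => aux_summable hq0 hq1 ℓ lam d hlam_pos hd_pos hL hM hlam hd s hs,
    fun s hs0 hs => aux_not_summable hq0 hq1 ℓ lam d hd_pos hL hM hlam hd s hs0 hs,
    aux_limit hq0 hq1 ℓ hℓ lam d hlam_pos hd_pos hL hM hlam hd⟩
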